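/- In the Böttcher setting, let δ > 0 with U_δ[0] ⊂ V and let E ⊂ B_δ°∖{z0} be a finite nonempty set such that every iterate f^n is injective on E. Then the set of all functions g ∈ H(ℂ∖{z0}) such that {g∘f^n|_E : n ∈ ℕ} is dense in C(E) (the space ℂ^E with the supremum norm) is a comeager subset of H(ℂ∖{z0}). -/

import Mathlib

open Set Filter Topology Function Metric TopologicalSpace

noncomputable section

/-- The chordal metric on the Riemann sphere `ℂ_∞ = OnePoint ℂ`. -/
def chordal (x y : OnePoint ℂ) : ℝ :=
  Option.elim x (Option.elim y 0 fun w => 2 / Real.sqrt (1 + ‖w‖ ^ 2))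
    fun z => Option.elim y (2 / Real.sqrt (1 + ‖z‖ ^ 2))
      fun w => 2 * ‖z - w‖ / (Real.sqrt (1 + ‖z‖ ^ 2) * Real.sqrt (1 + ‖w‖ ^ 2))

/-- The chordal distance from a point of the Riemann sphere to a set of points. -/
def chordalDistSet (x : OnePoint ℂ) (S : Set (OnePoint ℂ)) : ℝ :=
  sInf (chordal x '' S)

/-- `M ⊆ ℂ` has no holes iff `ℂ_∞ ∖ M` is connected. -/
def NoHoles (M : Set ℂ) : Prop :=
  IsConnected (((↑) '' M : Set (OnePoint ℂ))ᶜ)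

/-- The boundary `∂_∞ Ω` of `Ω ⊆ ℂ` taken in the Riemann sphere. -/
def sphereBoundary (Ω : Set ℂ) : Set (OnePoint ℂ) :=
  frontier ((↑) '' Ω)

/-- `U_0(M)`: the nonempty open subsets of `M` having no holes. -/
def U0 (M : Set ℂ) : Set (Set ℂ) :=
  {U | U.Nonempty ∧ IsOpen U ∧ U ⊆ M ∧ NoHoles U}

/-- `K_0(M)`: the nonempty compact subsets of `M` having no holes. -/
def K0 (M : Set ℂ) : Set (Set ℂ) :=
  {K | K.Nonempty ∧ IsCompact K ∧ K ⊆ M ∧ NoHoles K}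

/-- `H(D)`: holomorphic functions on `D`, with the topology of locally uniform
convergence on `D` (induced from the compact-open topology on `C(D, ℂ)`). -/
def HolFun (D : Set ℂ) : Type := {g : ℂ → ℂ // DifferentiableOn ℂ g D}

instance (D : Set ℂ) : TopologicalSpace (HolFun D) :=
  TopologicalSpace.induced
    (fun g : HolFun D => (⟨D.restrict g.1, g.2.continuousOn.restrict⟩ : C(D, ℂ)))
    inferInstance

/-- The orbit `{g ∘ f^n |_U : n ∈ ℕ}` is dense in `H(U)`,
i.e. `g` is `H(U)`-universal for the composition operator `C_f`. -/
def DenseOrbitIn (g f : ℂ → ℂ) (U : Set ℂ) : Prop :=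
  Dense {h : HolFun U | ∃ n : ℕ, Set.EqOn h.1 (g ∘ f^[n]) U}

/-- In the Böttcher setting, the compact neighbourhood `B_δ = φ⁻¹(U_δ[0])` of the
superattracting fixed point. -/
def Bdelta (U : Set ℂ) (φ : ℂ → ℂ) (δ : ℝ) : Set ℂ :=
  {z ∈ U | φ z ∈ Metric.closedBall (0 : ℂ) δ}

/-- The Gaussian rationals `ℚ + iℚ`. -/
def ratGauss : Set ℂ := {z : ℂ | ∃ q r : ℚ, z = (q : ℂ) + (r : ℂ) * Complex.I}



/-- Bottcher interpolation function: small on compacts away from z0, prescribed values at pts. -/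
def bottL (z0 : ℂ) {ι : Type*} [Fintype ι] [DecidableEq ι] (pt : ι → ℂ) (c : ι → ℂ) (m : ℕ) : ℂ → ℂ :=
  fun ζ => ∑ j, c j * ((ζ - z0)⁻¹ * (pt j - z0))^m *
    ∏ k ∈ Finset.univ.erase j, ((ζ - z0)⁻¹ - (pt k - z0)⁻¹) / ((pt j - z0)⁻¹ - (pt k - z0)⁻¹)

lemma bottL_diff (z0 : ℂ) {ι : Type*} [Fintype ι] [DecidableEq ι] (pt : ι → ℂ) (c : ι → ℂ) (m : ℕ) :
    DifferentiableOn ℂ (bottL z0 pt c m) {z0}ᶜ := by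
  classical
  have hinv : DifferentiableOn ℂ (fun ζ : ℂ => (ζ - z0)⁻¹) {z0}ᶜ := by
    apply DifferentiableOn.inv
    · exact (differentiable_id.sub_const z0).differentiableOn
    · intro x hx
      simpa [sub_eq_zero] using hx
  apply DifferentiableOn.fun_sum
  intro j _
  apply DifferentiableOn.mul
  · exact ((hinv.mul_const _).pow m).const_mul _
  · intro x hx
    apply DifferentiableWithinAt.fun_finset_prod
    intro k _
    exact (((hinv x hx).sub_const _).div_const _)

lemma bottL_eval (z0 : ℂ) {ι : Type*} [Fintype ι] [DecidableEq ι] (pt : ι → ℂ) (c : ι → ℂ) (m : ℕ)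
    (hpt : ∀ j, pt j ≠ z0) (hinj : Function.Injective pt) (j : ι) :
    bottL z0 pt c m (pt j) = c j := by
  classical
  have ha : ∀ k, pt k - z0 ≠ 0 := fun k => sub_ne_zero.mpr (hpt k)
  have hw : ∀ k l, k ≠ l → (pt k - z0)⁻¹ - (pt l - z0)⁻¹ ≠ 0 := by
    intro k l hkl
    rw [sub_ne_zero]
    intro h
    exact hkl (hinj (by rw [sub_left_inj.mp (inv_injective h)]))
  rw [bottL, Finset.sum_eq_single j]
  · rw [inv_mul_cancel₀ (ha j), one_pow, mul_one, Finset.prod_congr rfl (fun k hk => ?_), Finset.prod_const_one, mul_one]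
    exact div_self (hw j k (Finset.ne_of_mem_erase hk).symm)
  · intro b _ hbj
    have : (j : ι) ∈ Finset.univ.erase b := Finset.mem_erase.mpr ⟨fun h => hbj h.symm, Finset.mem_univ _⟩
    rw [Finset.prod_eq_zero this (by simp [sub_self]), mul_zero]
  · simp

lemma bottL_bound (z0 : ℂ) {ι : Type*} [Fintype ι] [DecidableEq ι] (pt : ι → ℂ) (c : ι → ℂ)
    (m : ℕ) (d : ℝ) (hd : 0 < d) (hclose : ∀ j, ‖pt j - z0‖ ≤ d / 2)
    (ζ : ℂ) (hζ : d ≤ ‖ζ - z0‖) :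
    ‖bottL z0 pt c m ζ‖ ≤ (1/2 : ℝ)^m * ∑ j, ‖c j‖ *
      ∏ k ∈ Finset.univ.erase j,
        ((d⁻¹ + ‖(pt k - z0)⁻¹‖) * ‖(pt j - z0)⁻¹ - (pt k - z0)⁻¹‖⁻¹) := by
  have hwζ : ‖(ζ - z0)⁻¹‖ ≤ d⁻¹ := by
    rw [norm_inv]
    exact inv_anti₀ hd hζ
  refine (norm_sum_le _ _).trans ?_
  rw [Finset.mul_sum]
  refine Finset.sum_le_sum (fun j _ => ?_)
  rw [norm_mul, norm_mul, norm_pow]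
  have hA : ‖(ζ - z0)⁻¹ * (pt j - z0)‖ ≤ 1/2 := by
    rw [norm_mul]
    calc ‖(ζ - z0)⁻¹‖ * ‖pt j - z0‖ ≤ d⁻¹ * (d/2) :=
          mul_le_mul hwζ (hclose j) (norm_nonneg _) (by positivity)
      _ = 1/2 := by field_simp
  have hP : ‖∏ k ∈ Finset.univ.erase j,
      ((ζ - z0)⁻¹ - (pt k - z0)⁻¹) / ((pt j - z0)⁻¹ - (pt k - z0)⁻¹)‖ ≤
      ∏ k ∈ Finset.univ.erase j,
        ((d⁻¹ + ‖(pt k - z0)⁻¹‖) * ‖(pt j - z0)⁻¹ - (pt k - z0)⁻¹‖⁻¹) := by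
    rw [norm_prod]
    refine Finset.prod_le_prod (fun k _ => norm_nonneg _) (fun k _ => ?_)
    rw [norm_div, div_eq_mul_inv, ← norm_inv]
    refine mul_le_mul_of_nonneg_right ?_ (norm_nonneg _)
    exact (norm_sub_le _ _).trans (add_le_add hwζ le_rfl)
  calc ‖c j‖ * ‖(ζ - z0)⁻¹ * (pt j - z0)‖ ^ m * ‖∏ k ∈ Finset.univ.erase j,
        ((ζ - z0)⁻¹ - (pt k - z0)⁻¹) / ((pt j - z0)⁻¹ - (pt k - z0)⁻¹)‖
      ≤ ‖c j‖ * (1/2 : ℝ)^m * ∏ k ∈ Finset.univ.erase j,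
        ((d⁻¹ + ‖(pt k - z0)⁻¹‖) * ‖(pt j - z0)⁻¹ - (pt k - z0)⁻¹‖⁻¹) := by
        refine mul_le_mul (mul_le_mul_of_nonneg_left (pow_le_pow_left₀ (norm_nonneg _) hA m)
          (norm_nonneg _)) hP (norm_nonneg _) (by positivity)
    _ = (1/2 : ℝ)^m * (‖c j‖ * ∏ k ∈ Finset.univ.erase j,
        ((d⁻¹ + ‖(pt k - z0)⁻¹‖) * ‖(pt j - z0)⁻¹ - (pt k - z0)⁻¹‖⁻¹)) := by ring

lemma bott_inv_cont (z0 : ℂ) (U : Set ℂ) (hU : IsOpen U) (hz0U : z0 ∈ U)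
    (φ : ℂ → ℂ) (hφd : DifferentiableOn ℂ φ U) (hinj : Set.InjOn φ U) (hφ0 : φ z0 = 0) :
    ∀ r > 0, ∃ ρ > 0, ∀ w ∈ U, ‖φ w‖ < ρ → dist w z0 < r := by
  intro r hr
  obtain ⟨t, htpos, htU⟩ := Metric.isOpen_iff.mp hU z0 hz0U
  set r' := min t r with hr'
  have hr'pos : 0 < r' := lt_min htpos hr
  have hr'U : Metric.ball z0 r' ⊆ U := (Metric.ball_subset_ball (min_le_left _ _)).trans htU
  have hA : AnalyticAt ℂ φ z0 := hφd.analyticAt (hU.mem_nhds hz0U)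
  rcases hA.eventually_constant_or_nhds_le_map_nhds with h | h
  · exfalso
    obtain ⟨s, hspos, hs⟩ := Metric.eventually_nhds_iff.mp h
    set z1 : ℂ := z0 + ((min s r') / 2 : ℝ) with hz1
    have hd1 : dist z1 z0 = (min s r') / 2 := by
      rw [hz1, dist_eq_norm, add_sub_cancel_left, Complex.norm_real,
        Real.norm_of_nonneg (by positivity)]
    have hmin : (0:ℝ) < min s r' := lt_min hspos hr'pos
    have hz1U : z1 ∈ U := hr'U (by
      rw [Metric.mem_ball, hd1]
      exact lt_of_lt_of_le (half_lt_self hmin) (min_le_right s r'))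
    have hz1ne : z1 ≠ z0 := by
      intro hcon
      rw [hcon] at hd1
      simp at hd1
      linarith
    have : φ z1 = φ z0 := hs (by
      rw [hd1]; exact lt_of_lt_of_le (half_lt_self hmin) (min_le_left s r'))
    exact hz1ne (hinj hz1U hz0U this)
  · have himg : φ '' Metric.ball z0 r' ∈ 𝓝 (0 : ℂ) := by
      rw [← hφ0]
      exact h (Filter.image_mem_map (Metric.ball_mem_nhds _ hr'pos))
    obtain ⟨ρ, hρpos, hρ⟩ := Metric.mem_nhds_iff.mp himg
    refine ⟨ρ, hρpos, fun w hw hwρ => ?_⟩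
    obtain ⟨w', hw', hww'⟩ := hρ (by rwa [Metric.mem_ball, dist_zero_right])
    have := hinj (hr'U hw') hw hww'
    rw [← this]
    exact lt_of_lt_of_le hw' (min_le_right _ _)

lemma bott_iter (U : Set ℂ) (f φ : ℂ → ℂ) (hfU : Set.MapsTo f U U) (p : ℕ)
    (hconj : ∀ z ∈ U, φ (f z) = (φ z) ^ p) (z : ℂ) (hz : z ∈ U) :
    ∀ n : ℕ, f^[n] z ∈ U ∧ φ (f^[n] z) = (φ z) ^ (p ^ n) := by
  intro n
  induction n with
  | zero => simpa using hz
  | succ n ih =>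
    rw [Function.iterate_succ_apply']
    refine ⟨hfU ih.1, ?_⟩
    rw [hconj _ ih.1, ih.2, ← pow_mul, ← pow_succ]

/-- Böttcher setting: for a finite nonempty set `E ⊆ B_δ° ∖ {z0}` on which all
iterates of `f` are injective, the set of `g ∈ H(ℂ∖{z0})` such that
`{g∘f^n|_E : n ∈ ℕ}` is dense in `C(E)` is comeager in `H(ℂ∖{z0})`. -/
theorem universality_comeager_superattracting_finite
    (z0 : ℂ) (U V : Set ℂ) (hU : IsOpen U) (hV : IsOpen V)
    (hz0U : z0 ∈ U) (h0V : (0 : ℂ) ∈ V) (hV1 : V ⊆ Metric.ball (0 : ℂ) 1)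
    (f : ℂ → ℂ) (hf : DifferentiableOn ℂ f U) (hfU : MapsTo f U U)
    (hfix : f z0 = z0) (hder : deriv f z0 = 0)
    (hnc : ¬ ∃ c : ℂ, ∀ z ∈ U, f z = c)
    (p : ℕ) (hp : 2 ≤ p)
    (φ : ℂ → ℂ) (hφd : DifferentiableOn ℂ φ U) (hφb : Set.BijOn φ U V)
    (hφ0 : φ z0 = 0) (hconj : ∀ z ∈ U, φ (f z) = (φ z) ^ p)
    (δ : ℝ) (hδ : 0 < δ) (hδV : Metric.closedBall (0 : ℂ) δ ⊆ V)
    (E : Set ℂ) (hE : E ⊆ interior (Bdelta U φ δ) \ {z0})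
    (hEfin : E.Finite) (hEne : E.Nonempty)
    (hinj : ∀ n : ℕ, Set.InjOn (f^[n]) E) :
    {g : HolFun ({z0}ᶜ) |
        Dense {h : ↥E → ℂ | ∃ n : ℕ, ∀ z : ↥E, h z = g.1 (f^[n] (z : ℂ))}}
      ∈ residual (HolFun ({z0}ᶜ)) := by
  classical
  haveI : Fintype ↥E := hEfin.fintype
  have hδ1 : δ < 1 := by
    have h1 : (δ : ℂ) ∈ Metric.closedBall (0 : ℂ) δ := by
      simp [Metric.mem_closedBall, dist_zero_right, Complex.norm_real,
        abs_of_nonneg hδ.le]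
    have h2 := hV1 (hδV h1)
    simpa [Metric.mem_ball, dist_zero_right, Complex.norm_real,
      abs_of_nonneg hδ.le] using h2
  have hEU : ∀ z ∈ E, z ∈ U ∧ ‖φ z‖ ≤ δ ∧ z ≠ z0 := by
    intro z hz
    obtain ⟨hz1, hz2⟩ := hE hz
    have hzB : z ∈ Bdelta U φ δ := interior_subset hz1
    refine ⟨hzB.1, ?_, hz2⟩
    have := hzB.2
    simpa [Metric.mem_closedBall, dist_zero_right] using this
  have hφinj := hφb.injOn
  have hφne : ∀ z ∈ E, φ z ≠ 0 := by
    intro z hz h0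
    exact (hEU z hz).2.2 (hφinj (hEU z hz).1 hz0U (by rw [h0, hφ0]))
  have hiter : ∀ z ∈ E, ∀ n : ℕ, f^[n] z ∈ U ∧ φ (f^[n] z) = (φ z) ^ (p ^ n) :=
    fun z hz => bott_iter U f φ hfU p hconj z (hEU z hz).1
  have hne : ∀ z ∈ E, ∀ n : ℕ, f^[n] z ≠ z0 := by
    intro z hz n h
    have h2 := (hiter z hz n).2
    rw [h, hφ0] at h2
    exact pow_ne_zero _ (hφne z hz) h2.symm
  have hmem : ∀ (n : ℕ) (z : ↥E), f^[n] (↑z : ℂ) ∈ ({z0}ᶜ : Set ℂ) :=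
    fun n z h => hne ↑z z.2 n h
  have hsmall : ∀ r > 0, ∃ n : ℕ, ∀ z ∈ E, dist (f^[n] z) z0 < r := by
    intro r hr
    obtain ⟨ρ, hρ, hQ⟩ := bott_inv_cont z0 U hU hz0U φ hφd hφinj hφ0 r hr
    obtain ⟨n, hn⟩ :=
      ((tendsto_pow_atTop_nhds_zero_of_lt_one hδ.le hδ1).eventually
        (gt_mem_nhds hρ)).exists
    refine ⟨n, fun z hz => ?_⟩
    apply hQ _ (hiter z hz n).1
    rw [(hiter z hz n).2, norm_pow]
    calc ‖φ z‖ ^ p ^ n ≤ δ ^ p ^ n :=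
          pow_le_pow_left₀ (norm_nonneg _) (hEU z hz).2.1 _
      _ ≤ δ ^ n := pow_le_pow_of_le_one hδ.le hδ1.le
          (Nat.le_of_lt (Nat.lt_pow_self (n := n) (by omega : 1 < p)))
      _ < ρ := hn
  set ι : HolFun ({z0}ᶜ) → C(↥({z0}ᶜ : Set ℂ), ℂ) :=
    fun g => (⟨({z0}ᶜ : Set ℂ).restrict g.1, g.2.continuousOn.restrict⟩ :
      C(↥({z0}ᶜ : Set ℂ), ℂ)) with hι
  have hI : IsInducing ι := ⟨rfl⟩
  set S : (↥E → ℂ) → ℝ → Set (HolFun ({z0}ᶜ)) :=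
    fun t ε => {g | ∃ n : ℕ, ∀ z : ↥E, dist (g.1 (f^[n] (↑z : ℂ))) (t z) < ε} with hS
  have hopen : ∀ t ε, IsOpen (S t ε) := by
    intro t ε
    have hSeq : S t ε = ⋃ n : ℕ, ⋂ z : ↥E,
        (fun g : HolFun ({z0}ᶜ) => ι g ⟨f^[n] (↑z : ℂ), hmem n z⟩) ⁻¹'
          Metric.ball (t z) ε := by
      ext g
      simp only [hS, Set.mem_setOf_eq, Set.mem_iUnion, Set.mem_iInter,
        Set.mem_preimage, Metric.mem_ball]
      rfl
    rw [hSeq]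
    exact isOpen_iUnion fun n => isOpen_iInter_of_finite fun z =>
      Metric.isOpen_ball.preimage
        ((continuous_eval_const _).comp hI.continuous)
  have hdense : ∀ t ε, 0 < ε → Dense (S t ε) := by
    intro t ε hε g₀
    have hb := hI.basis_nhds (x := g₀)
      (nhds_basis_uniformity' ContinuousMap.hasBasis_compactConvergenceUniformity)
    rw [mem_closure_iff_nhds_basis hb]
    rintro ⟨K, W⟩ ⟨hK, hW⟩
    obtain ⟨η, hηpos, hηW⟩ := Metric.mem_uniformity_dist.mp hW
    obtain ⟨d, hd, hdK⟩ : ∃ d > 0, ∀ w ∈ Subtype.val '' K, d ≤ ‖w - z0‖ := by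
      rcases (Subtype.val '' K).eq_empty_or_nonempty with h | h
      · exact ⟨1, one_pos, by simp [h]⟩
      · have hK' : IsCompact (Subtype.val '' K) := hK.image continuous_subtype_val
        obtain ⟨w0, hw0, hmin⟩ := hK'.exists_isMinOn h
          ((continuous_id.sub continuous_const).norm.continuousOn)
        refine ⟨‖w0 - z0‖, ?_, fun w hw => hmin hw⟩
        obtain ⟨x, -, rfl⟩ := hw0
        exact norm_sub_pos_iff.mpr x.2
    obtain ⟨n, hn⟩ := hsmall (d / 2) (by positivity)
    set pt : ↥E → ℂ := fun z => f^[n] (↑z : ℂ) with hptdef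
    have hptne : ∀ j, pt j ≠ z0 := fun j => hne ↑j j.2 n
    have hptinj : Function.Injective pt := fun a b hab =>
      Subtype.ext (hinj n a.2 b.2 hab)
    set c : ↥E → ℂ := fun j => t j - g₀.1 (pt j) with hcdef
    have hclose : ∀ j, ‖pt j - z0‖ ≤ d / 2 := fun j => by
      rw [← dist_eq_norm]; exact (hn _ j.2).le
    set C : ℝ := ∑ j, ‖c j‖ * ∏ k ∈ Finset.univ.erase j,
      ((d⁻¹ + ‖(pt k - z0)⁻¹‖) * ‖(pt j - z0)⁻¹ - (pt k - z0)⁻¹‖⁻¹) with hCdef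
    have hlim : Tendsto (fun m : ℕ => (1/2 : ℝ)^m * C) atTop (𝓝 0) := by
      simpa using (tendsto_pow_atTop_nhds_zero_of_lt_one (by norm_num)
        (by norm_num : (1/2 : ℝ) < 1)).mul_const C
    obtain ⟨m, hm⟩ := (hlim.eventually (gt_mem_nhds hηpos)).exists
    set g : HolFun ({z0}ᶜ) := ⟨fun ζ => g₀.1 ζ + bottL z0 pt c m ζ,
      g₀.2.add (bottL_diff z0 pt c m)⟩ with hgdef
    refine ⟨g, ⟨n, fun z => ?_⟩, ?_⟩
    · show dist (g₀.1 (pt z) + bottL z0 pt c m (pt z)) (t z) < ε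
      rw [bottL_eval z0 pt c m hptne hptinj z]
      have hcz : g₀.1 (pt z) + c z = t z := by simp [hcdef]
      rw [hcz, dist_self]
      exact hε
    · simp only [Function.comp_apply, Set.mem_preimage, Set.mem_setOf_eq]
      intro x hx
      apply hηW
      have heq : dist (ι g₀ x) (ι g x) = ‖bottL z0 pt c m (↑x : ℂ)‖ := by
        show dist (g₀.1 ↑x) (g₀.1 ↑x + bottL z0 pt c m ↑x) = _
        rw [dist_eq_norm, sub_add_cancel_left, norm_neg]
      rw [heq]
      calc ‖bottL z0 pt c m (↑x : ℂ)‖ ≤ (1/2 : ℝ)^m * C := by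
            rw [hCdef]
            exact bottL_bound z0 pt c m d hd hclose ↑x (hdK _ ⟨x, hx, rfl⟩)
        _ < η := hm
  obtain ⟨T, hTc, hTd⟩ := TopologicalSpace.exists_countable_dense (↥E → ℂ)
  haveI : Countable ↥T := hTc.to_subtype
  have hres : (⋂ q : ↥T × ℕ, S q.1.1 (1 / ((q.2 : ℝ) + 1)))
      ∈ residual (HolFun ({z0}ᶜ)) := by
    rw [countable_iInter_mem]
    rintro ⟨t, k⟩
    exact residual_of_dense_open (hopen _ _) (hdense _ _ (by positivity))
  refine Filter.mem_of_superset hres ?_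
  intro g hg
  simp only [Set.mem_iInter] at hg
  show Dense {h : ↥E → ℂ | ∃ n : ℕ, ∀ z : ↥E, h z = g.1 (f^[n] (z : ℂ))}
  rw [Metric.dense_iff]
  intro x r hr
  obtain ⟨y, hyB, hyT⟩ := Metric.dense_iff.mp hTd x (r/2) (by positivity)
  obtain ⟨k, hk⟩ := exists_nat_one_div_lt (show (0:ℝ) < r/2 by positivity)
  obtain ⟨n, hn⟩ := hg (⟨⟨y, hyT⟩, k⟩ : ↥T × ℕ)
  refine ⟨fun z => g.1 (f^[n] (↑z : ℂ)), ?_, n, fun z => rfl⟩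
  rw [Metric.mem_ball]
  have h1 : dist (fun z : ↥E => g.1 (f^[n] (↑z : ℂ))) y < r/2 := by
    rw [dist_pi_lt_iff (by positivity)]
    intro b
    exact lt_trans (hn b) hk
  have h2 : dist y x < r/2 := Metric.mem_ball.mp hyB
  calc dist (fun z : ↥E => g.1 (f^[n] (↑z : ℂ))) x
      ≤ dist (fun z : ↥E => g.1 (f^[n] (↑z : ℂ))) y + dist y x := dist_triangle _ _ _
    _ < r := by linarith
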